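/- Let X be a finite ground set, let d ≥ 0 and k ≥ 1 be integers, and let f be a normalized monotone set function on X that is d-scopic submodular. Then for every S ⊆ X and every S* ⊆ X with |S*| ≤ k, one has f(S*) − f(S) ≤ k · (max over T ⊆ X with |T| ≤ d + 1 of f(T | S)). -/

import Mathlib

variable {α : Type*} [Fintype α] [DecidableEq α]

/-- The margin of `S` given `T`: `f(S|T) = f(S ∪ T) - f T`. -/
def margin (f : Finset α → ℝ) (S T : Finset α) : ℝ := f (S ∪ T) - f T

/-- `f` is `d`-scopic submodular: for all `S ⊆ T` and `v ∉ T`,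
`f({v}|T) ≤ max_{T' ⊆ T, |T'| ≤ d} f({v}|S ∪ T')`. -/
def ScopicSubmodular (d : ℕ) (f : Finset α → ℝ) : Prop :=
  ∀ S T : Finset α, S ⊆ T → ∀ v, v ∉ T →
    ∃ T' : Finset α, T' ⊆ T ∧ T'.card ≤ d ∧ margin f {v} T ≤ margin f {v} (S ∪ T')

/-- if `f` is a normalized monotone `d`-scopic submodular function, then for
every `S` and every `S*` with `|S*| ≤ k`,
`f(S*) - f(S) ≤ k · max_{|T| ≤ d+1} f(T | S)`. -/
theorem scopic_submodular_gain_bound (f : Finset α → ℝ) (hnorm : f ∅ = 0)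
    (hmono : ∀ S T : Finset α, S ⊆ T → f S ≤ f T) (d k : ℕ) (hk : 1 ≤ k)
    (hscopic : ScopicSubmodular d f) :
    ∀ S Sstar : Finset α, Sstar.card ≤ k →
      f Sstar - f S ≤ (k : ℝ) *
        ((Finset.univ.powerset.filter fun T : Finset α => T.card ≤ d + 1).sup'
          ⟨∅, by simp⟩ fun T => margin f T S) := by
  intro S Sstar hcard
  set M := ((Finset.univ.powerset.filter fun T : Finset α => T.card ≤ d + 1).sup'
      ⟨∅, by simp⟩ fun T => margin f T S) with hMdef
  have hmem : ∀ T : Finset α, T.card ≤ d + 1 → margin f T S ≤ M := by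
    intro T hT
    rw [hMdef]
    exact Finset.le_sup' (fun T => margin f T S) (Finset.mem_filter.mpr ⟨Finset.mem_powerset.mpr (Finset.subset_univ _), hT⟩)
  have hM0 : 0 ≤ M := by
    have := hmem ∅ (by simp)
    simpa [margin] using this
  -- marginal of a single element is bounded by M
  have hsingle : ∀ (A : Finset α) (v : α), margin f {v} (A ∪ S) ≤ M := by
    intro A v
    by_cases hv : v ∈ A ∪ S
    · have : ({v} : Finset α) ∪ (A ∪ S) = A ∪ S := by
        simp [Finset.union_eq_right.mpr, Finset.singleton_subset_iff.mpr hv]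
      simpa [margin, this] using hM0
    · obtain ⟨T', hT'sub, hT'card, hle⟩ :=
        hscopic S (A ∪ S) (Finset.subset_union_right) v hv
      refine hle.trans ?_
      have h2 : margin f {v} (S ∪ T') ≤ margin f ({v} ∪ T') S := by
        have hunion : ({v} : Finset α) ∪ (S ∪ T') = ({v} ∪ T') ∪ S := by
          ac_rfl
        have : f S ≤ f (S ∪ T') := hmono _ _ Finset.subset_union_left
        simp only [margin, hunion]
        linarith
      refine h2.trans (hmem _ ?_)
      calc ({v} ∪ T').card ≤ ({v} : Finset α).card + T'.card := Finset.card_union_le _ _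
        _ ≤ 1 + d := by simp; omega
        _ = d + 1 := by omega
  -- telescoping induction
  have hmain : ∀ A : Finset α, f (A ∪ S) - f S ≤ (A.card : ℝ) * M := by
    intro A
    induction A using Finset.induction_on with
    | empty => simp
    | @insert v A hv ih =>
      have h1 : margin f {v} (A ∪ S) ≤ M := hsingle A v
      have heq : insert v A ∪ S = {v} ∪ (A ∪ S) := by
        simp [Finset.insert_union, Finset.union_assoc]
      have hcard' : ((insert v A).card : ℝ) = A.card + 1 := by
        rw [Finset.card_insert_of_notMem hv]; push_cast; ring
      rw [heq, hcard']
      simp only [margin] at h1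
      linarith
  have h1 : f Sstar ≤ f (Sstar ∪ S) := hmono _ _ Finset.subset_union_left
  have h2 := hmain Sstar
  have h3 : (Sstar.card : ℝ) * M ≤ (k : ℝ) * M := by
    apply mul_le_mul_of_nonneg_right _ hM0
    exact_mod_cast hcard
  linarith
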